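/- Let p, n, k ≥ 1 and let W ⊆ ℂⁿ be an open set such that every a = (a_1, …, a_n) ∈ W has pairwise distinct, nonzero coordinates. Let B_1, …, B_n and C_1, …, C_k be holomorphic maps from W to the p×p complex matrices. For a ∈ W and z ∈ ℂ \ {0, a_1, …, a_n} set A(a, z) = Σ_{l=1}^{k} C_l(a) · z^{-l} + Σ_{j=1}^{n} B_j(a) · (z − a_j)^{-1} and, for each i, A_i(a, z) = −B_i(a) · (z − a_i)^{-1}. Then the zero-curvature (integrability) conditions dω¹ = ω¹ ∧ ω¹ for the matrix 1-form ω¹ = A dz + Σ_i A_i da_i, namely: (F1) ∂A_i/∂z − ∂A/∂a_i = A·A_i − A_i·A for every i, and (F2) ∂A_j/∂a_i − ∂A_i/∂a_j = A_i·A_j − A_j·A_i for all i ≠ j, holding for all a ∈ W and all z ∈ ℂ \ {0, a_1, …, a_n}, are together equivalent to the following system holding on all of W: (E1) ∂B_i/∂a_j = [B_i, B_j]/(a_i − a_j) for all i ≠ j; (E2) Σ_{j=1}^{n} ∂B_i/∂a_j + ∂C_1/∂a_i = 0 for every i; (E3) ∂C_{l+1}/∂a_i − a_i · ∂C_l/∂a_i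 = −[B_i, C_l] for every i and every l = 1, …, k−1; (E4) a_i · ∂C_k/∂a_i = [B_i, C_k] for every i. -/

import Mathlib

open scoped BigOperators

/-- Entrywise partial derivative in the direction of the `i`-th coordinate
of a matrix-valued map on `ℂⁿ`. -/
noncomputable def pd {n p : ℕ} (i : Fin n)
    (f : (Fin n → ℂ) → Matrix (Fin p) (Fin p) ℂ) (a : Fin n → ℂ) :
    Matrix (Fin p) (Fin p) ℂ :=
  Matrix.of fun r c => fderiv ℂ (fun x => f x r c) a (Pi.single i 1)

/-- Entrywise derivative of a matrix-valued map of one complex variable. -/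
noncomputable def zd {p : ℕ}
    (f : ℂ → Matrix (Fin p) (Fin p) ℂ) (z : ℂ) :
    Matrix (Fin p) (Fin p) ℂ :=
  Matrix.of fun r c => deriv (fun w => f w r c) z

open Polynomial

lemma key_indep {n k : ℕ} (a : Fin n → ℂ) (ha : Function.Injective a)
    (h0 : ∀ j, a j ≠ 0) (α : ℕ → ℂ) (β : Fin n → ℂ)
    (h : ∀ z : ℂ, z ≠ 0 → (∀ j, z ≠ a j) →
      (∑ m ∈ Finset.Icc 1 k, α m * (z ^ m)⁻¹) + ∑ j, β j * (z - a j)⁻¹ = 0) :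
    (∀ m ∈ Finset.Icc 1 k, α m = 0) ∧ ∀ j, β j = 0 := by
  classical
  set P : Polynomial ℂ := ∏ j : Fin n, (X - Polynomial.C (a j)) with hP
  set Q : Polynomial ℂ :=
    (∑ m ∈ Finset.Icc 1 k, Polynomial.C (α m) * X ^ (k - m) * P)
    + ∑ j : Fin n, Polynomial.C (β j) * X ^ k * ∏ j' ∈ Finset.univ.erase j, (X - Polynomial.C (a j')) with hQ
  have hQeval : ∀ z : ℂ, z ≠ 0 → (∀ j, z ≠ a j) → Q.eval z = 0 := by
    intro z hz hzj
    have key := h z hz hzj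
    have hPz : P.eval z = ∏ j : Fin n, (z - a j) := by simp [hP, eval_prod]
    have hQz : Q.eval z =
        (∑ m ∈ Finset.Icc 1 k, α m * z ^ (k - m) * ∏ j : Fin n, (z - a j))
        + ∑ j : Fin n, β j * z ^ k * ∏ j' ∈ Finset.univ.erase j, (z - a j') := by
      simp only [hQ, eval_add, eval_finset_sum, eval_mul, eval_pow, eval_X, eval_C, hPz,
        eval_prod, eval_sub]
    rw [hQz]
    have h1 : ∀ m ∈ Finset.Icc 1 k, α m * z ^ (k - m) * ∏ j : Fin n, (z - a j)
        = (α m * (z ^ m)⁻¹) * (z ^ k * ∏ j : Fin n, (z - a j)) := by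
      intro m hm
      rw [Finset.mem_Icc] at hm
      have : z ^ (k - m) = z ^ k / z ^ m := pow_sub₀ z hz hm.2
      field_simp [this]
      have h' : z ^ (k - m) * z ^ m = z ^ k := by rw [← pow_add, Nat.sub_add_cancel hm.2]
      linear_combination (α m * ∏ x, (z - a x)) * h'
    have h2 : ∀ j : Fin n, β j * z ^ k * ∏ j' ∈ Finset.univ.erase j, (z - a j')
        = (β j * (z - a j)⁻¹) * (z ^ k * ∏ j : Fin n, (z - a j)) := by
      intro j
      have hne : z - a j ≠ 0 := sub_ne_zero_of_ne (hzj j)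
      rw [← Finset.mul_prod_erase Finset.univ _ (Finset.mem_univ j)]
      field_simp
    have e1 : (∑ m ∈ Finset.Icc 1 k, α m * z ^ (k - m) * ∏ j : Fin n, (z - a j))
        = (∑ m ∈ Finset.Icc 1 k, α m * (z ^ m)⁻¹) * (z ^ k * ∏ j : Fin n, (z - a j)) := by
      rw [Finset.sum_congr rfl h1, ← Finset.sum_mul]
    have e2 : (∑ j : Fin n, β j * z ^ k * ∏ j' ∈ Finset.univ.erase j, (z - a j'))
        = (∑ j : Fin n, β j * (z - a j)⁻¹) * (z ^ k * ∏ j : Fin n, (z - a j)) := by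
      rw [Finset.sum_congr rfl (fun j _ => h2 j), ← Finset.sum_mul]
    rw [e1, e2, ← add_mul, key, zero_mul]
  have hQ0 : Q = 0 := by
    apply Polynomial.eq_zero_of_infinite_isRoot
    have hfin : (({0} ∪ Set.range a : Set ℂ)).Finite := by
      exact (Set.finite_singleton 0).union (Set.finite_range a)
    apply Set.Infinite.mono (h := ?_) hfin.infinite_compl
    intro z hz
    simp only [Set.mem_compl_iff, Set.mem_union, Set.mem_singleton_iff, Set.mem_range,
      not_or, not_exists] at hz
    exact hQeval z hz.1 (fun j => fun hzj => hz.2 j hzj.symm)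
  -- β = 0
  have hβ : ∀ j, β j = 0 := by
    intro j
    have := congrArg (Polynomial.eval (a j)) hQ0
    simp only [hQ, eval_add, eval_finset_sum, eval_mul, eval_pow, eval_X, eval_C,
      eval_zero, eval_prod, eval_sub, hP] at this
    rw [Finset.sum_eq_zero (fun m _ => by
        rw [Finset.prod_eq_zero (Finset.mem_univ j) (by ring)]; ring),
      Finset.sum_eq_single j (fun j' _ hj' => by
        rw [Finset.prod_eq_zero (Finset.mem_erase.2 ⟨hj'.symm, Finset.mem_univ j⟩)
          (by ring : a j - a j = 0)]; ring)
        (fun hj => absurd (Finset.mem_univ j) hj), zero_add] at this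
    have hprod : ∏ j' ∈ Finset.univ.erase j, (a j - a j') ≠ 0 := by
      apply Finset.prod_ne_zero_iff.2
      intro j' hj'
      exact sub_ne_zero_of_ne (fun hh => (Finset.mem_erase.1 hj').1 (ha hh.symm))
    have := mul_eq_zero.1 this
    rcases this with h' | h'
    · rcases mul_eq_zero.1 h' with h'' | h''
      · exact h''
      · exact absurd h'' (pow_ne_zero k (h0 j))
    · exact absurd h' hprod
  refine ⟨?_, hβ⟩
  -- now α
  have hQ0' : (∑ m ∈ Finset.Icc 1 k, Polynomial.C (α m) * X ^ (k - m)) * P = 0 := by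
    rw [Finset.sum_mul, ← hQ0, hQ]
    simp [hβ]
  have hPne : P ≠ 0 := by
    apply Polynomial.Monic.ne_zero
    exact monic_prod_of_monic _ _ (fun j _ => monic_X_sub_C (a j))
  have hs : (∑ m ∈ Finset.Icc 1 k, Polynomial.C (α m) * X ^ (k - m)) = 0 :=
    (mul_eq_zero.1 hQ0').resolve_right hPne
  intro m hm
  have := congrArg (fun q => Polynomial.coeff q (k - m)) hs
  rw [Finset.mem_Icc] at hm
  simp only [Polynomial.finset_sum_coeff, Polynomial.coeff_C_mul, Polynomial.coeff_X_pow,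
    Polynomial.coeff_zero] at this
  rw [Finset.sum_eq_single m (fun m' hm' hne => by
      rw [Finset.mem_Icc] at hm'
      rw [if_neg (by omega), mul_zero]) (fun h => absurd (Finset.mem_Icc.2 hm) h)] at this
  rw [if_pos rfl, mul_one] at this
  exact this

-- matrix coefficient-extraction iff
lemma key_indep_mat {p n k : ℕ} (a : Fin n → ℂ) (ha : Function.Injective a)
    (h0 : ∀ j, a j ≠ 0) (α : ℕ → Matrix (Fin p) (Fin p) ℂ)
    (β : Fin n → Matrix (Fin p) (Fin p) ℂ)
    (hkey : ∀ (α' : ℕ → ℂ) (β' : Fin n → ℂ),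
      (∀ z : ℂ, z ≠ 0 → (∀ j, z ≠ a j) →
        (∑ m ∈ Finset.Icc 1 k, α' m * (z ^ m)⁻¹) + ∑ j, β' j * (z - a j)⁻¹ = 0) →
      (∀ m ∈ Finset.Icc 1 k, α' m = 0) ∧ ∀ j, β' j = 0) :
    (∀ z : ℂ, z ≠ 0 → (∀ j, z ≠ a j) →
      (∑ m ∈ Finset.Icc 1 k, (z ^ m)⁻¹ • α m) + ∑ j, (z - a j)⁻¹ • β j = 0)
    ↔ ((∀ m ∈ Finset.Icc 1 k, α m = 0) ∧ ∀ j, β j = 0) := by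
  constructor
  · intro h
    have entry : ∀ r c, (∀ m ∈ Finset.Icc 1 k, α m r c = 0) ∧ ∀ j, β j r c = 0 := by
      intro r c
      apply hkey (fun m => α m r c) (fun j => β j r c)
      intro z hz hzj
      have := congrArg (fun M : Matrix (Fin p) (Fin p) ℂ => M r c) (h z hz hzj)
      simpa [Matrix.sum_apply, Matrix.smul_apply, smul_eq_mul, mul_comm] using this
    constructor
    · intro m hm; ext r c; simpa using (entry r c).1 m hm
    · intro j; ext r c; simpa using (entry r c).2 j
  · intro ⟨h1, h2⟩ z hz hzj
    rw [Finset.sum_eq_zero (fun m hm => by rw [h1 m hm, smul_zero]),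
      Finset.sum_eq_zero (fun j _ => by rw [h2 j, smul_zero]), add_zero]

-- partial fraction basics
lemma pf2 {z a b : ℂ} (hza : z ≠ a) (hzb : z ≠ b) (hab : a ≠ b) :
    (z - a)⁻¹ * (z - b)⁻¹ = (a - b)⁻¹ * ((z - a)⁻¹ - (z - b)⁻¹) := by
  have h1 : z - a ≠ 0 := sub_ne_zero_of_ne hza
  have h2 : z - b ≠ 0 := sub_ne_zero_of_ne hzb
  have h3 : a - b ≠ 0 := sub_ne_zero_of_ne hab
  field_simp
  ring

lemma pf_pow {z a : ℂ} (hz : z ≠ 0) (ha : a ≠ 0) (hza : z ≠ a) (l : ℕ) :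
    (z - a)⁻¹ * (z ^ l)⁻¹
      = (a ^ l)⁻¹ * (z - a)⁻¹ - ∑ m ∈ Finset.Icc 1 l, (a ^ (l + 1 - m))⁻¹ * (z ^ m)⁻¹ := by
  induction l with
  | zero => simp
  | succ l ih =>
    have hza' : z - a ≠ 0 := sub_ne_zero_of_ne hza
    have base : (z - a)⁻¹ * z⁻¹ = a⁻¹ * ((z - a)⁻¹ - z⁻¹) := by
      field_simp
      ring
    have step : (z - a)⁻¹ * (z ^ (l + 1))⁻¹ = ((z - a)⁻¹ * (z ^ l)⁻¹) * z⁻¹ := by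
      rw [pow_succ, mul_inv]; ring
    rw [step, ih, sub_mul, Finset.sum_mul]
    have e1 : (a ^ l)⁻¹ * (z - a)⁻¹ * z⁻¹
        = (a ^ (l + 1))⁻¹ * (z - a)⁻¹ - (a ^ (l + 1))⁻¹ * z⁻¹ := by
      rw [mul_assoc, base, pow_succ, mul_inv]; ring
    rw [e1]
    have e2 : ∑ m ∈ Finset.Icc 1 l, (a ^ (l + 1 - m))⁻¹ * (z ^ m)⁻¹ * z⁻¹
        = ∑ m ∈ Finset.Icc 2 (l + 1), (a ^ (l + 2 - m))⁻¹ * (z ^ m)⁻¹ := by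
      rw [show Finset.Icc 2 (l + 1) = Finset.map (addRightEmbedding 1) (Finset.Icc 1 l) by
        rw [Finset.map_add_right_Icc], Finset.sum_map]
      apply Finset.sum_congr rfl
      intro m hm
      rw [Finset.mem_Icc] at hm
      simp only [addRightEmbedding_apply]
      rw [show l + 2 - (m + 1) = l + 1 - m by omega, pow_succ, mul_inv]
      ring
    rw [e2]
    have e3 : ∑ m ∈ Finset.Icc 1 (l + 1), (a ^ (l + 1 + 1 - m))⁻¹ * (z ^ m)⁻¹
        = (a ^ (l + 1))⁻¹ * z⁻¹ + ∑ m ∈ Finset.Icc 2 (l + 1), (a ^ (l + 2 - m))⁻¹ * (z ^ m)⁻¹ := by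
      rw [Finset.Icc_eq_cons_Ioc (by omega), Finset.sum_cons, ← Finset.Icc_add_one_left_eq_Ioc]
      norm_num
    rw [e3]; ring
lemma hasfd_inv {n : ℕ} (a : Fin n → ℂ) (z : ℂ) (j : Fin n) (hz : z ≠ a j) :
    HasFDerivAt (fun x : Fin n → ℂ => (z - x j)⁻¹)
      (((z - a j) ^ 2)⁻¹ • ContinuousLinearMap.proj (R := ℂ) (φ := fun _ : Fin n => ℂ) j) a := by
  have h1 : HasFDerivAt (fun x : Fin n → ℂ => z - x j)
      (0 - ContinuousLinearMap.proj (R := ℂ) (φ := fun _ : Fin n => ℂ) j) a :=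
    (hasFDerivAt_const z a).sub
      ((ContinuousLinearMap.proj (R := ℂ) (φ := fun _ : Fin n => ℂ) j).hasFDerivAt)
  have h2 := (hasDerivAt_inv (sub_ne_zero_of_ne hz)).comp_hasFDerivAt a h1
  rw [zero_sub, smul_neg, neg_smul, neg_neg] at h2
  exact h2

lemma zd_Ai_eq {p : ℕ} (c₀ z : ℂ) (hz : z ≠ c₀) (M : Matrix (Fin p) (Fin p) ℂ) :
    zd (fun w => -((w - c₀)⁻¹ • M)) z = ((z - c₀) ^ 2)⁻¹ • M := by
  ext r c
  simp only [zd, Matrix.of_apply, Matrix.neg_apply, Matrix.smul_apply, smul_eq_mul]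
  have h : HasDerivAt (fun w : ℂ => -((w - c₀)⁻¹ * M r c))
      (-(-1 / (z - c₀) ^ 2 * M r c)) z :=
    ((((hasDerivAt_id z).sub_const c₀).inv (sub_ne_zero_of_ne hz)).mul_const (M r c)).neg
  rw [h.deriv]
  have : z - c₀ ≠ 0 := sub_ne_zero_of_ne hz
  field_simp

lemma pd_A_eq {p n k : ℕ} (a : Fin n → ℂ) (z : ℂ) (hzj : ∀ j, z ≠ a j)
    (B : Fin n → (Fin n → ℂ) → Matrix (Fin p) (Fin p) ℂ)
    (C : ℕ → (Fin n → ℂ) → Matrix (Fin p) (Fin p) ℂ)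
    (hB : ∀ j r c, DifferentiableAt ℂ (fun x => B j x r c) a)
    (hC : ∀ l ∈ Finset.Icc 1 k, ∀ r c, DifferentiableAt ℂ (fun x => C l x r c) a)
    (i : Fin n) :
    pd i (fun x => (∑ l ∈ Finset.Icc 1 k, (z ^ l)⁻¹ • C l x) + ∑ j, (z - x j)⁻¹ • B j x) a
      = ((∑ l ∈ Finset.Icc 1 k, (z ^ l)⁻¹ • pd i (C l) a)
          + ∑ j, (z - a j)⁻¹ • pd i (B j) a)
        + ((z - a i) ^ 2)⁻¹ • B i a := by
  ext r c
  simp only [pd, Matrix.of_apply, Matrix.add_apply, Matrix.sum_apply, Matrix.smul_apply,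
    smul_eq_mul]
  have H : HasFDerivAt
      (fun x : Fin n → ℂ => (∑ l ∈ Finset.Icc 1 k, (z ^ l)⁻¹ * C l x r c)
        + ∑ j, (z - x j)⁻¹ * B j x r c)
      ((∑ l ∈ Finset.Icc 1 k, (z ^ l)⁻¹ • fderiv ℂ (fun x => C l x r c) a)
        + ∑ j, ((z - a j)⁻¹ • fderiv ℂ (fun x => B j x r c) a
            + B j a r c • (((z - a j) ^ 2)⁻¹ • ContinuousLinearMap.proj j))) a := by
    apply HasFDerivAt.add
    · exact HasFDerivAt.fun_sum (fun l hl => ((hC l hl r c).hasFDerivAt).const_mul ((z ^ l)⁻¹))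
    · exact HasFDerivAt.fun_sum (fun j _ => (hasfd_inv a z j (hzj j)).mul ((hB j r c).hasFDerivAt))
  rw [H.fderiv]
  simp only [ContinuousLinearMap.add_apply, ContinuousLinearMap.coe_sum',
    Finset.sum_apply, ContinuousLinearMap.smul_apply, ContinuousLinearMap.proj_apply,
    smul_eq_mul, Pi.single_apply]
  have hδ : ∑ j, B j a r c * (((z - a j) ^ 2)⁻¹ * if j = i then (1:ℂ) else 0)
      = ((z - a i) ^ 2)⁻¹ * B i a r c := by
    rw [Finset.sum_eq_single i]
    · simp [mul_comm]
    · intro j _ hji; simp [hji]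
    · intro h; exact absurd (Finset.mem_univ i) h
  rw [Finset.sum_add_distrib, hδ, add_assoc]

lemma pd_Ai_eq {p n : ℕ} (a : Fin n → ℂ) (z : ℂ) (j : Fin n) (hzj : z ≠ a j)
    (B : (Fin n → ℂ) → Matrix (Fin p) (Fin p) ℂ)
    (hB : ∀ r c, DifferentiableAt ℂ (fun x => B x r c) a)
    (i : Fin n) :
    pd i (fun x => -((z - x j)⁻¹ • B x)) a
      = -((z - a j)⁻¹ • pd i (fun x => B x) a)
        - (if i = j then ((z - a j) ^ 2)⁻¹ • B a else 0) := by
  ext r c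
  simp only [pd, Matrix.of_apply, Matrix.neg_apply, Matrix.smul_apply, Matrix.sub_apply,
    smul_eq_mul]
  have H : HasFDerivAt (fun x : Fin n → ℂ => -((z - x j)⁻¹ * B x r c))
      (-((z - a j)⁻¹ • fderiv ℂ (fun x => B x r c) a
          + B a r c • (((z - a j) ^ 2)⁻¹ • ContinuousLinearMap.proj j))) a :=
    ((hasfd_inv a z j hzj).mul ((hB r c).hasFDerivAt)).neg
  rw [H.fderiv]
  simp only [ContinuousLinearMap.neg_apply, ContinuousLinearMap.add_apply,
    ContinuousLinearMap.smul_apply, ContinuousLinearMap.proj_apply, smul_eq_mul,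
    Pi.single_apply, apply_ite (fun M : Matrix (Fin p) (Fin p) ℂ => M r c),
    Matrix.smul_apply, Matrix.zero_apply, smul_eq_mul]
  by_cases hij : i = j
  · subst hij; simp only [if_pos rfl, if_true, eq_self_iff_true]; ring
  · rw [if_neg hij, if_neg (fun h => hij h.symm)]; ring
section NF
variable {p n k : ℕ}

lemma NF1_gen (a : Fin n → ℂ) (i : Fin n)
    (DB J : Fin n → Matrix (Fin p) (Fin p) ℂ) (DC K : ℕ → Matrix (Fin p) (Fin p) ℂ)
    (hJi : J i = 0) (ha0 : a i ≠ 0) (hinj : ∀ j, j ≠ i → a i ≠ a j)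
    (z : ℂ) (hz : z ≠ 0) (hzj : ∀ j, z ≠ a j) :
    ((-(∑ l ∈ Finset.Icc 1 k, (z ^ l)⁻¹ • DC l) - ∑ j, (z - a j)⁻¹ • DB j)
      - ((∑ l ∈ Finset.Icc 1 k, ((z - a i)⁻¹ * (z ^ l)⁻¹) • K l)
         + ∑ j, ((z - a i)⁻¹ * (z - a j)⁻¹) • J j))
    = -((∑ m ∈ Finset.Icc 1 k, (z ^ m)⁻¹ •
          (DC m - ∑ l ∈ Finset.Icc m k, ((a i) ^ (l + 1 - m))⁻¹ • K l))
       + ∑ j, (z - a j)⁻¹ •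
          (if j = i then
            DB i + (∑ l ∈ Finset.Icc 1 k, ((a i) ^ l)⁻¹ • K l)
              + ∑ j' ∈ Finset.univ.erase i, (a i - a j')⁻¹ • J j'
           else DB j - (a i - a j)⁻¹ • J j)) := by
  -- expand the pow-products
  have stepK : (∑ l ∈ Finset.Icc 1 k, ((z - a i)⁻¹ * (z ^ l)⁻¹) • K l)
      = (z - a i)⁻¹ • (∑ l ∈ Finset.Icc 1 k, ((a i) ^ l)⁻¹ • K l)
        - ∑ m ∈ Finset.Icc 1 k, (z ^ m)⁻¹ •
            (∑ l ∈ Finset.Icc m k, ((a i) ^ (l + 1 - m))⁻¹ • K l) := by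
    have e : ∀ l ∈ Finset.Icc 1 k, ((z - a i)⁻¹ * (z ^ l)⁻¹) • K l
        = (z - a i)⁻¹ • (((a i) ^ l)⁻¹ • K l)
          - ∑ m ∈ Finset.Icc 1 l, (z ^ m)⁻¹ • (((a i) ^ (l + 1 - m))⁻¹ • K l) := by
      intro l _
      rw [pf_pow hz ha0 (hzj i) l, sub_smul, Finset.sum_smul]
      congr 1
      · rw [smul_smul, mul_comm]
      · exact Finset.sum_congr rfl (fun m _ => by rw [smul_smul, mul_comm])
    rw [Finset.sum_congr rfl e, Finset.sum_sub_distrib, ← Finset.smul_sum]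
    congr 1
    -- swap the double sum
    rw [Finset.sum_comm' (t' := Finset.Icc 1 k) (s' := fun m => Finset.Icc m k)
      (by intro x y; simp only [Finset.mem_Icc]; omega)]
    exact Finset.sum_congr rfl (fun m _ => by rw [Finset.smul_sum])
  have stepJ : (∑ j, ((z - a i)⁻¹ * (z - a j)⁻¹) • J j)
      = (z - a i)⁻¹ • (∑ j ∈ Finset.univ.erase i, (a i - a j)⁻¹ • J j)
        - ∑ j ∈ Finset.univ.erase i, (z - a j)⁻¹ • ((a i - a j)⁻¹ • J j) := by
    rw [← Finset.add_sum_erase _ _ (Finset.mem_univ i), hJi, smul_zero, zero_add]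
    have e : ∀ j ∈ Finset.univ.erase i, ((z - a i)⁻¹ * (z - a j)⁻¹) • J j
        = (z - a i)⁻¹ • ((a i - a j)⁻¹ • J j) - (z - a j)⁻¹ • ((a i - a j)⁻¹ • J j) := by
      intro j hj
      have hji : j ≠ i := (Finset.mem_erase.1 hj).1
      rw [pf2 (hzj i) (hzj j) (hinj j hji), smul_smul, smul_smul, mul_sub, sub_smul]
      ring_nf
    rw [Finset.sum_congr rfl e, Finset.sum_sub_distrib, ← Finset.smul_sum]
  rw [stepK, stepJ]
  -- expand the RHS if-sum
  have rhsJ : (∑ j, (z - a j)⁻¹ •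
        (if j = i then
          DB i + (∑ l ∈ Finset.Icc 1 k, ((a i) ^ l)⁻¹ • K l)
            + ∑ j' ∈ Finset.univ.erase i, (a i - a j')⁻¹ • J j'
         else DB j - (a i - a j)⁻¹ • J j))
      = (z - a i)⁻¹ • DB i
        + (z - a i)⁻¹ • (∑ l ∈ Finset.Icc 1 k, ((a i) ^ l)⁻¹ • K l)
        + (z - a i)⁻¹ • (∑ j' ∈ Finset.univ.erase i, (a i - a j')⁻¹ • J j')
        + (∑ j ∈ Finset.univ.erase i, (z - a j)⁻¹ • DB j)
        - ∑ j ∈ Finset.univ.erase i, (z - a j)⁻¹ • ((a i - a j)⁻¹ • J j) := by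
    rw [← Finset.add_sum_erase _ _ (Finset.mem_univ i), if_pos rfl]
    have e : ∀ j ∈ Finset.univ.erase i, (z - a j)⁻¹ •
          (if j = i then
            DB i + (∑ l ∈ Finset.Icc 1 k, ((a i) ^ l)⁻¹ • K l)
              + ∑ j' ∈ Finset.univ.erase i, (a i - a j')⁻¹ • J j'
           else DB j - (a i - a j)⁻¹ • J j)
        = (z - a j)⁻¹ • DB j - (z - a j)⁻¹ • ((a i - a j)⁻¹ • J j) := by
      intro j hj
      rw [if_neg (Finset.mem_erase.1 hj).1, smul_sub]
    rw [Finset.sum_congr rfl e, Finset.sum_sub_distrib, smul_add, smul_add]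
    abel
  rw [rhsJ]
  have lhsB : (∑ j, (z - a j)⁻¹ • DB j)
      = (z - a i)⁻¹ • DB i + ∑ j ∈ Finset.univ.erase i, (z - a j)⁻¹ • DB j := by
    rw [← Finset.add_sum_erase _ _ (Finset.mem_univ i)]
  rw [lhsB]
  have lhsC : (∑ m ∈ Finset.Icc 1 k, (z ^ m)⁻¹ •
        (DC m - ∑ l ∈ Finset.Icc m k, ((a i) ^ (l + 1 - m))⁻¹ • K l))
      = (∑ m ∈ Finset.Icc 1 k, (z ^ m)⁻¹ • DC m)
        - ∑ m ∈ Finset.Icc 1 k, (z ^ m)⁻¹ •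
            (∑ l ∈ Finset.Icc m k, ((a i) ^ (l + 1 - m))⁻¹ • K l) := by
    rw [← Finset.sum_sub_distrib]
    exact Finset.sum_congr rfl (fun m _ => by rw [smul_sub])
  rw [lhsC]
  abel

lemma NF2_gen (a : Fin n → ℂ) (i j : Fin n) (hij : i ≠ j)
    (DBij DBji Jij : Matrix (Fin p) (Fin p) ℂ)
    (hainj : a i ≠ a j)
    (z : ℂ) (hzi : z ≠ a i) (hzj : z ≠ a j) :
    ((-((z - a j)⁻¹ • DBij) - -((z - a i)⁻¹ • DBji))
      - ((z - a i)⁻¹ * (z - a j)⁻¹) • Jij)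
    = -((∑ m ∈ Finset.Icc 1 k, (z ^ m)⁻¹ • (0 : Matrix (Fin p) (Fin p) ℂ))
       + ∑ j' : Fin n, (z - a j')⁻¹ •
          (if j' = i then (a i - a j)⁻¹ • Jij - DBji
           else if j' = j then DBij - (a i - a j)⁻¹ • Jij else 0)) := by
  rw [Finset.sum_eq_zero (fun m _ => smul_zero _), zero_add]
  rw [pf2 hzi hzj hainj, mul_sub, sub_smul]
  have expand : (∑ j' : Fin n, (z - a j')⁻¹ •
        (if j' = i then (a i - a j)⁻¹ • Jij - DBji
         else if j' = j then DBij - (a i - a j)⁻¹ • Jij else 0))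
      = (z - a i)⁻¹ • ((a i - a j)⁻¹ • Jij - DBji)
        + (z - a j)⁻¹ • (DBij - (a i - a j)⁻¹ • Jij) := by
    rw [Finset.sum_eq_add_of_mem i j (Finset.mem_univ i) (Finset.mem_univ j) hij ?_]
    · rw [if_pos rfl, if_neg (Ne.symm hij), if_pos rfl]
    · intro j' _ hj'
      rw [if_neg hj'.1, if_neg hj'.2, smul_zero]
  rw [expand]
  module

lemma mulExp_gen {p n k : ℕ} (Bi : Matrix (Fin p) (Fin p) ℂ)
    (Cs : ℕ → Matrix (Fin p) (Fin p) ℂ) (Bs : Fin n → Matrix (Fin p) (Fin p) ℂ)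
    (s : ℂ) (t : ℕ → ℂ) (u : Fin n → ℂ) :
    ((∑ l ∈ Finset.Icc 1 k, t l • Cs l) + ∑ j, u j • Bs j) * -(s • Bi)
      - -(s • Bi) * ((∑ l ∈ Finset.Icc 1 k, t l • Cs l) + ∑ j, u j • Bs j)
    = (∑ l ∈ Finset.Icc 1 k, (s * t l) • (Bi * Cs l - Cs l * Bi))
      + ∑ j, (s * u j) • (Bi * Bs j - Bs j * Bi) := by
  simp only [Matrix.add_mul, Matrix.mul_add, Matrix.sum_mul, Matrix.mul_sum,
    smul_mul_assoc, mul_smul_comm, smul_smul, mul_neg, neg_mul, smul_neg, neg_neg,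
    smul_sub, Finset.sum_sub_distrib, sub_neg_eq_add, neg_add, Finset.sum_neg_distrib,
    smul_add, Finset.smul_sum]
  abel

lemma prodExp {p : ℕ} (Bi Bj : Matrix (Fin p) (Fin p) ℂ) (s u : ℂ) :
    -(s • Bi) * -(u • Bj) - -(u • Bj) * -(s • Bi)
      = (s * u) • (Bi * Bj - Bj * Bi) := by
  simp only [neg_mul_neg, smul_mul_assoc, mul_smul_comm, smul_smul, smul_sub]
  rw [mul_comm u s]

section Iffs
variable {p n k : ℕ}

lemma F1_iff (a : Fin n → ℂ) (hainj : Function.Injective a) (ha0 : ∀ j, a j ≠ 0)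
    (B : Fin n → (Fin n → ℂ) → Matrix (Fin p) (Fin p) ℂ)
    (C : ℕ → (Fin n → ℂ) → Matrix (Fin p) (Fin p) ℂ)
    (hBd : ∀ j r c, DifferentiableAt ℂ (fun x => B j x r c) a)
    (hCd : ∀ l ∈ Finset.Icc 1 k, ∀ r c, DifferentiableAt ℂ (fun x => C l x r c) a)
    (i : Fin n) :
    (∀ z : ℂ, z ≠ 0 → (∀ j, z ≠ a j) →
      zd (fun w => -((w - a i)⁻¹ • B i a)) z
        - pd i (fun x => (∑ l ∈ Finset.Icc 1 k, (z ^ l)⁻¹ • C l x)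
            + ∑ j, (z - x j)⁻¹ • B j x) a
      = ((∑ l ∈ Finset.Icc 1 k, (z ^ l)⁻¹ • C l a) + ∑ j, (z - a j)⁻¹ • B j a)
          * -((z - a i)⁻¹ • B i a)
        - -((z - a i)⁻¹ • B i a)
          * ((∑ l ∈ Finset.Icc 1 k, (z ^ l)⁻¹ • C l a) + ∑ j, (z - a j)⁻¹ • B j a))
    ↔ ((∀ m ∈ Finset.Icc 1 k, pd i (C m) a
          = ∑ l ∈ Finset.Icc m k, ((a i) ^ (l + 1 - m))⁻¹ • (B i a * C l a - C l a * B i a))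
       ∧ (∀ j, j ≠ i → pd i (B j) a
          = (a i - a j)⁻¹ • (B i a * B j a - B j a * B i a))
       ∧ pd i (B i) a
          + (∑ l ∈ Finset.Icc 1 k, ((a i) ^ l)⁻¹ • (B i a * C l a - C l a * B i a))
          + (∑ j ∈ Finset.univ.erase i, (a i - a j)⁻¹ • (B i a * B j a - B j a * B i a))
         = 0) := by
  have hJi : B i a * B i a - B i a * B i a = (0 : Matrix (Fin p) (Fin p) ℂ) := sub_self _
  have hinj : ∀ j, j ≠ i → a i ≠ a j := fun j hj he => hj (hainj he.symm)
  have hkm := key_indep_mat (k := k) a hainj ha0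
    (fun m => pd i (C m) a
      - ∑ l ∈ Finset.Icc m k, ((a i) ^ (l + 1 - m))⁻¹ • (B i a * C l a - C l a * B i a))
    (fun j => if j = i then
        pd i (B i) a
          + (∑ l ∈ Finset.Icc 1 k, ((a i) ^ l)⁻¹ • (B i a * C l a - C l a * B i a))
          + (∑ j' ∈ Finset.univ.erase i, (a i - a j')⁻¹ • (B i a * B j' a - B j' a * B i a))
      else pd i (B j) a - (a i - a j)⁻¹ • (B i a * B j a - B j a * B i a))
    (fun α' β' h => key_indep a hainj ha0 α' β' h)
  have point : ∀ z : ℂ, z ≠ 0 → (∀ j, z ≠ a j) →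
      ((zd (fun w => -((w - a i)⁻¹ • B i a)) z
        - pd i (fun x => (∑ l ∈ Finset.Icc 1 k, (z ^ l)⁻¹ • C l x)
            + ∑ j, (z - x j)⁻¹ • B j x) a
      = ((∑ l ∈ Finset.Icc 1 k, (z ^ l)⁻¹ • C l a) + ∑ j, (z - a j)⁻¹ • B j a)
          * -((z - a i)⁻¹ • B i a)
        - -((z - a i)⁻¹ • B i a)
          * ((∑ l ∈ Finset.Icc 1 k, (z ^ l)⁻¹ • C l a) + ∑ j, (z - a j)⁻¹ • B j a))
      ↔ ((∑ m ∈ Finset.Icc 1 k, (z ^ m)⁻¹ •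
            (pd i (C m) a - ∑ l ∈ Finset.Icc m k,
              ((a i) ^ (l + 1 - m))⁻¹ • (B i a * C l a - C l a * B i a)))
        + ∑ j, (z - a j)⁻¹ •
            (if j = i then
              pd i (B i) a
                + (∑ l ∈ Finset.Icc 1 k, ((a i) ^ l)⁻¹ • (B i a * C l a - C l a * B i a))
                + (∑ j' ∈ Finset.univ.erase i,
                    (a i - a j')⁻¹ • (B i a * B j' a - B j' a * B i a))
             else pd i (B j) a - (a i - a j)⁻¹ • (B i a * B j a - B j a * B i a))
        = 0)) := by
    intro z hz hzj
    rw [zd_Ai_eq (a i) z (hzj i) (B i a), pd_A_eq a z hzj B C hBd hCd i,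
      mulExp_gen (B i a) (fun l => C l a) (fun j => B j a) ((z - a i)⁻¹)
        (fun l => (z ^ l)⁻¹) (fun j => (z - a j)⁻¹)]
    rw [← sub_eq_zero]
    have lhs_eq : (((z - a i) ^ 2)⁻¹ • B i a
          - (((∑ l ∈ Finset.Icc 1 k, (z ^ l)⁻¹ • pd i (C l) a)
              + ∑ j, (z - a j)⁻¹ • pd i (B j) a)
            + ((z - a i) ^ 2)⁻¹ • B i a))
          - ((∑ l ∈ Finset.Icc 1 k, ((z - a i)⁻¹ * (z ^ l)⁻¹) •
                (B i a * C l a - C l a * B i a))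
            + ∑ j, ((z - a i)⁻¹ * (z - a j)⁻¹) • (B i a * B j a - B j a * B i a))
        = ((-(∑ l ∈ Finset.Icc 1 k, (z ^ l)⁻¹ • pd i (C l) a)
            - ∑ j, (z - a j)⁻¹ • pd i (B j) a)
          - ((∑ l ∈ Finset.Icc 1 k, ((z - a i)⁻¹ * (z ^ l)⁻¹) •
                (B i a * C l a - C l a * B i a))
            + ∑ j, ((z - a i)⁻¹ * (z - a j)⁻¹) • (B i a * B j a - B j a * B i a))) := by
      abel
    rw [lhs_eq, NF1_gen a i (fun j => pd i (B j) a)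
      (fun j => B i a * B j a - B j a * B i a) (fun m => pd i (C m) a)
      (fun l => B i a * C l a - C l a * B i a) hJi (ha0 i) hinj z hz hzj,
      neg_eq_zero]
  constructor
  · intro h
    have hc := hkm.1 (fun z hz hzj => (point z hz hzj).1 (h z hz hzj))
    refine ⟨fun m hm => sub_eq_zero.1 (hc.1 m hm), fun j hj => ?_, ?_⟩
    · have := hc.2 j
      simp only [if_neg hj] at this
      exact sub_eq_zero.1 this
    · have := hc.2 i
      simpa only [if_pos rfl, ↓reduceIte] using this
  · intro ⟨h1, h2, h3⟩ z hz hzj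
    refine (point z hz hzj).2 ?_
    refine hkm.2 ⟨fun m hm => sub_eq_zero.2 (h1 m hm), fun j => ?_⟩ z hz hzj
    by_cases hj : j = i
    · subst hj; simp only [if_pos rfl]; exact h3
    · simp only [if_neg hj]; exact sub_eq_zero.2 (h2 j hj)

lemma F2_iff (a : Fin n → ℂ) (hainj : Function.Injective a) (ha0 : ∀ j, a j ≠ 0)
    (B : Fin n → (Fin n → ℂ) → Matrix (Fin p) (Fin p) ℂ)
    (hBd : ∀ j r c, DifferentiableAt ℂ (fun x => B j x r c) a)
    (i j : Fin n) (hij : i ≠ j) :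
    (∀ z : ℂ, z ≠ 0 → (∀ j', z ≠ a j') →
      pd i (fun x => -((z - x j)⁻¹ • B j x)) a - pd j (fun x => -((z - x i)⁻¹ • B i x)) a
      = -((z - a i)⁻¹ • B i a) * -((z - a j)⁻¹ • B j a)
        - -((z - a j)⁻¹ • B j a) * -((z - a i)⁻¹ • B i a))
    ↔ (pd j (B i) a = (a i - a j)⁻¹ • (B i a * B j a - B j a * B i a)
       ∧ pd i (B j) a = (a i - a j)⁻¹ • (B i a * B j a - B j a * B i a)) := by
  have hainj' : a i ≠ a j := fun he => hij (hainj he)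
  have hkm := key_indep_mat (k := 0) a hainj ha0 (fun _ => 0)
    (fun j' => if j' = i then
        (a i - a j)⁻¹ • (B i a * B j a - B j a * B i a) - pd j (B i) a
      else if j' = j then
        pd i (B j) a - (a i - a j)⁻¹ • (B i a * B j a - B j a * B i a)
      else 0)
    (fun α' β' h => key_indep a hainj ha0 α' β' h)
  have point : ∀ z : ℂ, z ≠ 0 → (∀ j', z ≠ a j') →
      ((pd i (fun x => -((z - x j)⁻¹ • B j x)) a
          - pd j (fun x => -((z - x i)⁻¹ • B i x)) a
        = -((z - a i)⁻¹ • B i a) * -((z - a j)⁻¹ • B j a)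
          - -((z - a j)⁻¹ • B j a) * -((z - a i)⁻¹ • B i a))
      ↔ ((∑ m ∈ Finset.Icc 1 0, (z ^ m)⁻¹ • (0 : Matrix (Fin p) (Fin p) ℂ))
          + ∑ j' : Fin n, (z - a j')⁻¹ •
            (if j' = i then
              (a i - a j)⁻¹ • (B i a * B j a - B j a * B i a) - pd j (B i) a
             else if j' = j then
              pd i (B j) a - (a i - a j)⁻¹ • (B i a * B j a - B j a * B i a)
             else 0)
        = 0)) := by
    intro z hz hzj
    rw [pd_Ai_eq a z j (hzj j) (B j) (hBd j) i, if_neg hij, sub_zero,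
      pd_Ai_eq a z i (hzj i) (B i) (hBd i) j, if_neg (Ne.symm hij), sub_zero,
      prodExp (B i a) (B j a) ((z - a i)⁻¹) ((z - a j)⁻¹)]
    rw [← sub_eq_zero]
    rw [NF2_gen (k := 0) a i j hij (pd i (B j) a) (pd j (B i) a)
      (B i a * B j a - B j a * B i a) hainj' z (hzj i) (hzj j), neg_eq_zero]
  constructor
  · intro h
    have hc := hkm.1 (fun z hz hzj => (point z hz hzj).1 (h z hz hzj))
    constructor
    · have := hc.2 i
      simp only [if_pos rfl] at this
      exact (sub_eq_zero.1 this).symm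
    · have := hc.2 j
      simp only [if_neg (Ne.symm hij), if_pos rfl] at this
      exact sub_eq_zero.1 this
  · intro ⟨h1, h2⟩ z hz hzj
    refine (point z hz hzj).2 ?_
    refine hkm.2 ⟨fun m _ => rfl, fun j' => ?_⟩ z hz hzj
    by_cases h'i : j' = i
    · subst h'i; simp only [if_pos rfl]; exact sub_eq_zero.2 h1.symm
    · by_cases h'j : j' = j
      · subst h'j; simp only [if_neg h'i, if_pos rfl]; exact sub_eq_zero.2 h2
      · simp only [if_neg h'i, if_neg h'j]

end Iffs
end NF
lemma pow_inv_step {a : ℂ} (ha : a ≠ 0) (s : ℕ) : a * (a ^ (s + 1))⁻¹ = (a ^ s)⁻¹ := by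
  rw [pow_succ, mul_inv, ← mul_assoc]
  rw [mul_comm a (a ^ s)⁻¹, mul_assoc, mul_inv_cancel₀ ha, mul_one]

lemma inv_pow_step {a : ℂ} (s : ℕ) : a⁻¹ * (a ^ s)⁻¹ = (a ^ (s + 1))⁻¹ := by
  rw [pow_succ, mul_inv, mul_comm]

section GE
variable {p n k : ℕ}

lemma GE_equiv (hk : 1 ≤ k) (a : Fin n → ℂ) (ha0 : ∀ i, a i ≠ 0)
    (Bv : Fin n → Matrix (Fin p) (Fin p) ℂ) (Cv : ℕ → Matrix (Fin p) (Fin p) ℂ)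
    (DB : Fin n → Fin n → Matrix (Fin p) (Fin p) ℂ)
    (DC : Fin n → ℕ → Matrix (Fin p) (Fin p) ℂ) :
    ((∀ i : Fin n,
        (∀ m ∈ Finset.Icc 1 k, DC i m
            = ∑ l ∈ Finset.Icc m k, ((a i) ^ (l + 1 - m))⁻¹ • (Bv i * Cv l - Cv l * Bv i))
        ∧ (∀ j, j ≠ i → DB i j = (a i - a j)⁻¹ • (Bv i * Bv j - Bv j * Bv i))
        ∧ DB i i + (∑ l ∈ Finset.Icc 1 k, ((a i) ^ l)⁻¹ • (Bv i * Cv l - Cv l * Bv i))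
            + (∑ j ∈ Finset.univ.erase i, (a i - a j)⁻¹ • (Bv i * Bv j - Bv j * Bv i)) = 0)
      ∧ (∀ i j : Fin n, i ≠ j →
          DB j i = (a i - a j)⁻¹ • (Bv i * Bv j - Bv j * Bv i)
          ∧ DB i j = (a i - a j)⁻¹ • (Bv i * Bv j - Bv j * Bv i)))
    ↔ ((∀ i j : Fin n, i ≠ j → DB j i = (a i - a j)⁻¹ • (Bv i * Bv j - Bv j * Bv i))
      ∧ (∀ i : Fin n, (∑ j, DB j i) + DC i 1 = 0)
      ∧ (∀ i : Fin n, ∀ l, 1 ≤ l → l < k →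
          DC i (l + 1) - a i • DC i l = -(Bv i * Cv l - Cv l * Bv i))
      ∧ (∀ i : Fin n, a i • DC i k = Bv i * Cv k - Cv k * Bv i)) := by
  constructor
  · rintro ⟨hG, hF2⟩
    refine ⟨fun i j hij => (hF2 i j hij).1, ?_, ?_, ?_⟩
    · -- E2
      intro i
      obtain ⟨hG1, hG2, hG3⟩ := hG i
      rw [← Finset.add_sum_erase _ _ (Finset.mem_univ i)]
      rw [Finset.sum_congr rfl (fun j hj =>
        (hF2 i j (Ne.symm (Finset.mem_erase.1 hj).1)).1)]
      rw [hG1 1 (Finset.mem_Icc.2 ⟨le_refl 1, hk⟩)]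
      rw [Finset.sum_congr rfl (fun l _ => by
        rw [show l + 1 - 1 = l from by omega] :
        ∀ l ∈ Finset.Icc 1 k, ((a i) ^ (l + 1 - 1))⁻¹ • (Bv i * Cv l - Cv l * Bv i)
          = ((a i) ^ l)⁻¹ • (Bv i * Cv l - Cv l * Bv i))]
      rw [← hG3]
      abel
    · -- E3
      intro i m hm1 hmk
      obtain ⟨hG1, -, -⟩ := hG i
      rw [hG1 (m + 1) (Finset.mem_Icc.2 ⟨by omega, by omega⟩),
        hG1 m (Finset.mem_Icc.2 ⟨hm1, le_of_lt hmk⟩), Finset.smul_sum]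
      rw [Finset.sum_congr rfl (fun l hl => by
        rw [smul_smul, show a i * ((a i) ^ (l + 1 - m))⁻¹ = ((a i) ^ (l - m))⁻¹ from by
          rw [show l + 1 - m = (l - m) + 1 from by
            have := (Finset.mem_Icc.1 hl).1; omega]
          exact pow_inv_step (ha0 i) (l - m)] :
        ∀ l ∈ Finset.Icc m k, a i • (((a i) ^ (l + 1 - m))⁻¹ • (Bv i * Cv l - Cv l * Bv i))
          = ((a i) ^ (l - m))⁻¹ • (Bv i * Cv l - Cv l * Bv i))]
      rw [Finset.Icc_eq_cons_Ioc (le_of_lt hmk), Finset.sum_cons, ← Finset.Icc_add_one_left_eq_Ioc,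
        show m - m = 0 from by omega, pow_zero, inv_one, one_smul]
      rw [Finset.sum_congr rfl (fun l hl => by
        rw [show l + 1 - (m + 1) = l - m from by omega] :
        ∀ l ∈ Finset.Icc (m + 1) k,
          ((a i) ^ (l + 1 - (m + 1)))⁻¹ • (Bv i * Cv l - Cv l * Bv i)
          = ((a i) ^ (l - m))⁻¹ • (Bv i * Cv l - Cv l * Bv i))]
      abel
    · -- E4
      intro i
      obtain ⟨hG1, -, -⟩ := hG i
      rw [hG1 k (Finset.mem_Icc.2 ⟨hk, le_refl k⟩), Finset.Icc_self, Finset.sum_singleton,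
        show k + 1 - k = 1 from by omega, pow_one, smul_smul, mul_inv_cancel₀ (ha0 i),
        one_smul]
  · rintro ⟨hE1, hE2, hE3, hE4⟩
    have hG1 : ∀ (d : ℕ) (i : Fin n) (m : ℕ), 1 ≤ m → m + d = k →
        DC i m = ∑ l ∈ Finset.Icc m k, ((a i) ^ (l + 1 - m))⁻¹ • (Bv i * Cv l - Cv l * Bv i) := by
      intro d
      induction d with
      | zero =>
        intro i m hm1 hmk
        have hm : m = k := by omega
        subst hm
        rw [Finset.Icc_self, Finset.sum_singleton, show m + 1 - m = 1 from by omega, pow_one]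
        have h4 := hE4 i
        calc DC i m = (a i)⁻¹ • (a i • DC i m) := (inv_smul_smul₀ (ha0 i) _).symm
          _ = (a i)⁻¹ • (Bv i * Cv m - Cv m * Bv i) := by rw [h4]
      | succ d ih =>
        intro i m hm1 hmk
        have hmk' : m < k := by omega
        have h3 := hE3 i m hm1 hmk'
        have hstep : a i • DC i m = DC i (m + 1) + (Bv i * Cv m - Cv m * Bv i) := by
          calc a i • DC i m
              = DC i (m + 1) - (DC i (m + 1) - a i • DC i m) := by abel
            _ = DC i (m + 1) - -(Bv i * Cv m - Cv m * Bv i) := by rw [h3]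
            _ = DC i (m + 1) + (Bv i * Cv m - Cv m * Bv i) := by abel
        have : DC i m = (a i)⁻¹ • (DC i (m + 1) + (Bv i * Cv m - Cv m * Bv i)) := by
          rw [← hstep, inv_smul_smul₀ (ha0 i)]
        rw [this, ih i (m + 1) (by omega) (by omega), smul_add, Finset.smul_sum]
        rw [Finset.sum_congr rfl (fun l hl => by
          rw [smul_smul, show (a i)⁻¹ * ((a i) ^ (l + 1 - (m + 1)))⁻¹
              = ((a i) ^ (l + 1 - m))⁻¹ from by
            rw [inv_pow_step, show l + 1 - (m + 1) + 1 = l + 1 - m from by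
              have := (Finset.mem_Icc.1 hl).1; omega]] :
          ∀ l ∈ Finset.Icc (m + 1) k,
            (a i)⁻¹ • (((a i) ^ (l + 1 - (m + 1)))⁻¹ • (Bv i * Cv l - Cv l * Bv i))
            = ((a i) ^ (l + 1 - m))⁻¹ • (Bv i * Cv l - Cv l * Bv i))]
        rw [Finset.Icc_eq_cons_Ioc (le_of_lt hmk'), Finset.sum_cons, ← Finset.Icc_add_one_left_eq_Ioc,
          show m + 1 - m = 1 from by omega, pow_one]
        abel
    have hG1' : ∀ (i : Fin n), ∀ m ∈ Finset.Icc 1 k,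
        DC i m = ∑ l ∈ Finset.Icc m k, ((a i) ^ (l + 1 - m))⁻¹ • (Bv i * Cv l - Cv l * Bv i) := by
      intro i m hm
      rw [Finset.mem_Icc] at hm
      exact hG1 (k - m) i m hm.1 (by omega)
    have hG2 : ∀ (i : Fin n), ∀ j, j ≠ i →
        DB i j = (a i - a j)⁻¹ • (Bv i * Bv j - Bv j * Bv i) := by
      intro i j hji
      rw [hE1 j i hji]
      rw [show (a j - a i)⁻¹ = -((a i - a j)⁻¹ : ℂ) from by
        rw [show a j - a i = -(a i - a j) from by ring, ← neg_inv]]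
      module
    refine ⟨fun i => ⟨hG1' i, hG2 i, ?_⟩, fun i j hij => ⟨hE1 i j hij, hG2 i j (Ne.symm hij)⟩⟩
    have key : (∑ j, DB j i) + DC i 1
        = DB i i + (∑ l ∈ Finset.Icc 1 k, ((a i) ^ l)⁻¹ • (Bv i * Cv l - Cv l * Bv i))
          + (∑ j ∈ Finset.univ.erase i, (a i - a j)⁻¹ • (Bv i * Bv j - Bv j * Bv i)) := by
      rw [← Finset.add_sum_erase _ _ (Finset.mem_univ i)]
      rw [Finset.sum_congr rfl (fun j hj =>
        hE1 i j (Ne.symm (Finset.mem_erase.1 hj).1))]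
      rw [hG1' i 1 (Finset.mem_Icc.2 ⟨le_refl 1, hk⟩)]
      rw [Finset.sum_congr rfl (fun l _ => by
        rw [show l + 1 - 1 = l from by omega] :
        ∀ l ∈ Finset.Icc 1 k, ((a i) ^ (l + 1 - 1))⁻¹ • (Bv i * Cv l - Cv l * Bv i)
          = ((a i) ^ l)⁻¹ • (Bv i * Cv l - Cv l * Bv i))]
      abel
    rw [← key]
    exact hE2 i

end GE

/-- Proposition 7: the zero-curvature (integrability) conditions
`dω¹ = ω¹ ∧ ω¹` for `ω¹ = A dz + Σ_i A_i da_i`, with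
`A(a,z) = Σ_{l=1}^k C_l(a) z^{-l} + Σ_j B_j(a) (z - a_j)^{-1}` and
`A_i(a,z) = -B_i(a) (z - a_i)^{-1}`, are equivalent to the modified
Schlesinger system (6)–(8) of the paper. -/
theorem isomonodromic_deformation_equations
    {p n k : ℕ} (hp : 1 ≤ p) (hn : 1 ≤ n) (hk : 1 ≤ k)
    (W : Set (Fin n → ℂ)) (hWopen : IsOpen W)
    (hWdist : ∀ a ∈ W, Function.Injective a)
    (hWne : ∀ a ∈ W, ∀ i, a i ≠ 0)
    (B : Fin n → (Fin n → ℂ) → Matrix (Fin p) (Fin p) ℂ)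
    (C : ℕ → (Fin n → ℂ) → Matrix (Fin p) (Fin p) ℂ)
    (hB : ∀ i r c, DifferentiableOn ℂ (fun x => B i x r c) W)
    (hC : ∀ l ∈ Finset.Icc 1 k, ∀ r c, DifferentiableOn ℂ (fun x => C l x r c) W)
    (A : (Fin n → ℂ) → ℂ → Matrix (Fin p) (Fin p) ℂ)
    (hA : A = fun a z =>
      (∑ l ∈ Finset.Icc 1 k, (z ^ l)⁻¹ • C l a)
        + ∑ j : Fin n, (z - a j)⁻¹ • B j a)
    (Ai : Fin n → (Fin n → ℂ) → ℂ → Matrix (Fin p) (Fin p) ℂ)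
    (hAi : Ai = fun i a z => -((z - a i)⁻¹ • B i a)) :
    (∀ a ∈ W, ∀ z : ℂ, z ≠ 0 → (∀ j, z ≠ a j) →
        (∀ i : Fin n,
          zd (Ai i a) z - pd i (fun x => A x z) a
            = A a z * Ai i a z - Ai i a z * A a z)
        ∧ (∀ i j : Fin n, i ≠ j →
          pd i (fun x => Ai j x z) a - pd j (fun x => Ai i x z) a
            = Ai i a z * Ai j a z - Ai j a z * Ai i a z))
      ↔ (∀ a ∈ W,
        (∀ i j : Fin n, i ≠ j →
          pd j (B i) a = (a i - a j)⁻¹ • (B i a * B j a - B j a * B i a))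
        ∧ (∀ i : Fin n, (∑ j : Fin n, pd j (B i) a) + pd i (C 1) a = 0)
        ∧ (∀ i : Fin n, ∀ l, 1 ≤ l → l < k →
          pd i (C (l + 1)) a - a i • pd i (C l) a
            = -(B i a * C l a - C l a * B i a))
        ∧ (∀ i : Fin n, a i • pd i (C k) a = B i a * C k a - C k a * B i a)) := by
  subst hA hAi
  constructor
  · intro hF a ha
    have hBd : ∀ j r c, DifferentiableAt ℂ (fun x => B j x r c) a :=
      fun j r c => (hB j r c).differentiableAt (hWopen.mem_nhds ha)
    have hCd : ∀ l ∈ Finset.Icc 1 k, ∀ r c, DifferentiableAt ℂ (fun x => C l x r c) a :=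
      fun l hl r c => (hC l hl r c).differentiableAt (hWopen.mem_nhds ha)
    have hainj := hWdist a ha
    have ha0 := hWne a ha
    have hGs : ∀ i : Fin n,
        (∀ m ∈ Finset.Icc 1 k, pd i (C m) a
            = ∑ l ∈ Finset.Icc m k, ((a i) ^ (l + 1 - m))⁻¹ • (B i a * C l a - C l a * B i a))
        ∧ (∀ j, j ≠ i → pd i (B j) a
            = (a i - a j)⁻¹ • (B i a * B j a - B j a * B i a))
        ∧ pd i (B i) a
            + (∑ l ∈ Finset.Icc 1 k, ((a i) ^ l)⁻¹ • (B i a * C l a - C l a * B i a))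
            + (∑ j ∈ Finset.univ.erase i, (a i - a j)⁻¹ • (B i a * B j a - B j a * B i a))
          = 0 := by
      intro i
      refine (F1_iff a hainj ha0 B C hBd hCd i).1 (fun z hz hzj => ?_)
      exact (hF a ha z hz hzj).1 i
    have hPairs : ∀ i j : Fin n, i ≠ j →
        pd j (B i) a = (a i - a j)⁻¹ • (B i a * B j a - B j a * B i a)
        ∧ pd i (B j) a = (a i - a j)⁻¹ • (B i a * B j a - B j a * B i a) := by
      intro i j hij
      refine (F2_iff a hainj ha0 B hBd i j hij).1 (fun z hz hzj => ?_)
      exact (hF a ha z hz hzj).2 i j hij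
    exact (GE_equiv hk a ha0 (fun i => B i a) (fun l => C l a)
      (fun i j => pd i (B j) a) (fun i l => pd i (C l) a)).1 ⟨hGs, hPairs⟩
  · intro hE a ha z hz hzj
    have hBd : ∀ j r c, DifferentiableAt ℂ (fun x => B j x r c) a :=
      fun j r c => (hB j r c).differentiableAt (hWopen.mem_nhds ha)
    have hCd : ∀ l ∈ Finset.Icc 1 k, ∀ r c, DifferentiableAt ℂ (fun x => C l x r c) a :=
      fun l hl r c => (hC l hl r c).differentiableAt (hWopen.mem_nhds ha)
    have hainj := hWdist a ha
    have ha0 := hWne a ha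
    obtain ⟨hGs, hPairs⟩ := (GE_equiv hk a ha0 (fun i => B i a) (fun l => C l a)
      (fun i j => pd i (B j) a) (fun i l => pd i (C l) a)).2 (hE a ha)
    constructor
    · intro i
      exact (F1_iff a hainj ha0 B C hBd hCd i).2 (hGs i) z hz hzj
    · intro i j hij
      exact (F2_iff a hainj ha0 B hBd i j hij).2 (hPairs i j hij) z hz hzj
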